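/- Let (u,v) be a finite-energy radial solution, i.e. a solution of the radial system with ∫₀^∞ t e^{u} dt, ∫₀^∞ t e^{v} dt, ∫₀^∞ t e^{u+v} dt all finite, and suppose ru'(r) → -2β₁ and rv'(r) → -2β₂ as r → ∞ with r²(e^{u+v} + e^v + e^u) → 0. Then 2∫₀^∞ t e^{u(t)+v(t)} dt = 4(N₁+1)(N₂+1) - 4(β₁-1)(β₂-1), 2∫₀^∞ t e^{u(t)} dt = 4N₁(N₂+1) - 4β₁(β₂-1), and 2∫₀^∞ t e^{v(t)} dt = 4β₂(β₁-1) - 4N₂(N₁+1). -/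

import Mathlib

open MeasureTheory Real Filter Set

lemma helper_zero {f : ℝ → ℝ} (hf : IntegrableOn f (Set.Ioc (0:ℝ) 1)) :
    Tendsto (fun a => ∫ t in Set.Ioc (0:ℝ) a, f t) (nhdsWithin 0 (Set.Ioi 0)) (nhds 0) := by
  have hicc : IntegrableOn f (Set.Icc (0:ℝ) 1) := by
    rwa [integrableOn_Icc_iff_integrableOn_Ioc]
  have hcont := intervalIntegral.continuousOn_primitive (μ := volume) (a := 0) (b := 1) hicc
  have h0 : ContinuousWithinAt (fun x => ∫ t in Set.Ioc (0:ℝ) x, f t) (Set.Icc 0 1) 0 :=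
    hcont 0 ⟨le_rfl, zero_le_one⟩
  have hval : (∫ t in Set.Ioc (0:ℝ) (0:ℝ), f t) = 0 := by simp
  have := h0.tendsto
  rw [hval] at this
  exact this.mono_left (nhdsWithin_le_of_mem
    (Filter.mem_of_superset (Ioo_mem_nhdsGT zero_lt_one) Set.Ioo_subset_Icc_self))

lemma helper_split {f : ℝ → ℝ} (hf : IntegrableOn f (Set.Ioi (0:ℝ))) :
    (∫ t in Set.Ioi (0:ℝ), f t) = (∫ t in Set.Ioc (0:ℝ) 1, f t) + ∫ t in Set.Ioi (1:ℝ), f t := by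
  rw [← MeasureTheory.setIntegral_union (Set.Ioc_disjoint_Ioi le_rfl) measurableSet_Ioi
    (hf.mono Set.Ioc_subset_Ioi_self le_rfl) (hf.mono (Set.Ioi_subset_Ioi zero_le_one) le_rfl),
    Set.Ioc_union_Ioi_eq_Ioi zero_le_one]

lemma helper_atTop {f : ℝ → ℝ} (hf : IntegrableOn f (Set.Ioi (0:ℝ))) :
    Tendsto (fun b => ∫ t in Set.Ioc (0:ℝ) b, f t) atTop (nhds (∫ t in Set.Ioi (0:ℝ), f t)) := by
  have h1 : Tendsto (fun b : ℝ => ∫ t in (1:ℝ)..b, f t) atTop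
      (nhds (∫ t in Set.Ioi (1:ℝ), f t)) :=
    MeasureTheory.intervalIntegral_tendsto_integral_Ioi 1
      (hf.mono (Set.Ioi_subset_Ioi zero_le_one) le_rfl) tendsto_id
  have h2 : Tendsto (fun b : ℝ => (∫ t in Set.Ioc (0:ℝ) 1, f t) + ∫ t in (1:ℝ)..b, f t) atTop
      (nhds ((∫ t in Set.Ioc (0:ℝ) 1, f t) + ∫ t in Set.Ioi (1:ℝ), f t)) :=
    tendsto_const_nhds.add h1
  rw [helper_split hf]
  refine h2.congr' ?_
  filter_upwards [eventually_ge_atTop (1:ℝ)] with b hb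
  rw [intervalIntegral.integral_of_le hb,
    ← MeasureTheory.setIntegral_union (Set.Ioc_disjoint_Ioc.mpr (by simp)) measurableSet_Ioc
      (hf.mono Set.Ioc_subset_Ioi_self le_rfl)
      (hf.mono (Set.Ioc_subset_Ioi_self.trans (Set.Ioi_subset_Ioi zero_le_one)) le_rfl),
    Set.Ioc_union_Ioc_eq_Ioc zero_le_one hb]


lemma helper_log {φ : ℝ → ℝ} {L N C ε₀ : ℝ} (hε₀ : 0 < ε₀)
    (hC : ∀ r ∈ Set.Ioo (0:ℝ) ε₀, |φ r - N * Real.log r| ≤ C)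
    (hder : ∀ r ∈ Set.Ioi (0:ℝ), HasDerivAt φ (deriv φ r) r)
    (hcont : ContinuousOn (deriv φ) (Set.Ioi 0))
    (hlim : Tendsto (fun r => r * deriv φ r) (nhdsWithin 0 (Set.Ioi 0)) (nhds L)) :
    L = N := by
  by_contra hne
  have hδ : 0 < |L - N| / 2 := by
    have : L - N ≠ 0 := sub_ne_zero.mpr hne
    positivity
  set δ := |L - N| / 2 with hδdef
  have hev : ∀ᶠ s in nhdsWithin 0 (Set.Ioi 0), |s * deriv φ s - L| < δ := by
    have := Metric.tendsto_nhds.mp hlim δ hδ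
    simpa [Real.dist_eq] using this
  rw [eventually_nhdsWithin_iff, Metric.eventually_nhds_iff] at hev
  obtain ⟨ε₁, hε₁, hball⟩ := hev
  set ε : ℝ := min 1 (min ε₀ ε₁) with hεdef
  have hεpos : 0 < ε := by positivity
  set e : ℝ := ε / 2 with hedef
  have hepos : 0 < e := by positivity
  have he1 : e < 1 := by
    have : ε ≤ 1 := min_le_left _ _
    simp only [hedef]; linarith
  have heε₀ : e < ε₀ := by
    have h1 : ε ≤ ε₀ := (min_le_right _ _).trans (min_le_left _ _)
    simp only [hedef]; linarith
  have heε₁ : e < ε₁ := by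
    have h1 : ε ≤ ε₁ := (min_le_right _ _).trans (min_le_right _ _)
    simp only [hedef]; linarith
  set K : ℝ := |φ e - L * Real.log e| with hKdef
  have hball' : ∀ s : ℝ, 0 < s → s ≤ e → |s * deriv φ s - L| < δ := by
    intro s hs hse
    refine hball ?_ hs
    rw [Real.dist_eq, sub_zero, abs_of_pos hs]
    linarith
  -- main estimate
  have main : ∀ r ∈ Set.Ioo (0:ℝ) e, |φ r - L * Real.log r - (φ e - L * Real.log e)|
      ≤ δ * (Real.log e - Real.log r) := by
    intro r ⟨hr0, hre⟩
    have hsub : Set.uIcc r e ⊆ Set.Ioi (0:ℝ) := by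
      rw [Set.uIcc_of_le hre.le]
      intro x hx; exact lt_of_lt_of_le hr0 hx.1
    have hFTC : ∫ s in r..e, deriv φ s = φ e - φ r :=
      intervalIntegral.integral_eq_sub_of_hasDerivAt
        (fun x hx => hder x (hsub hx)) ((hcont.mono hsub).intervalIntegrable)
    have h0notin : (0:ℝ) ∉ Set.uIcc r e := fun h => lt_irrefl (0:ℝ) (Set.mem_Ioi.mp (hsub h))
    have hlog : ∫ s in r..e, L * (1/s) = L * (Real.log e - Real.log r) := by
      rw [intervalIntegral.integral_const_mul, integral_one_div h0notin,
        Real.log_div (ne_of_gt hepos) (ne_of_gt hr0)]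
    have hint1 : IntervalIntegrable (fun s => deriv φ s - L * (1/s)) volume r e := by
      apply ContinuousOn.intervalIntegrable
      apply (hcont.mono hsub).sub
      apply ContinuousOn.mul continuousOn_const
      exact continuousOn_const.div (continuousOn_id) (fun x hx => ne_of_gt (hsub hx))
    have hδint : IntervalIntegrable (fun s => δ * (1/s)) volume r e := by
      apply ContinuousOn.intervalIntegrable
      apply ContinuousOn.mul continuousOn_const
      exact continuousOn_const.div (continuousOn_id) (fun x hx => ne_of_gt (hsub hx))
    have hbd : ‖∫ s in r..e, (deriv φ s - L * (1/s))‖ ≤ |∫ s in r..e, δ * (1/s)| := by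
      apply intervalIntegral.norm_integral_le_abs_of_norm_le _ hδint
      filter_upwards [ae_restrict_mem measurableSet_uIoc] with s hs
      rw [Set.uIoc_of_le hre.le] at hs
      have hs0 : 0 < s := lt_trans hr0 hs.1
      have := hball' s hs0 hs.2
      rw [Real.norm_eq_abs]
      have heq : deriv φ s - L * (1/s) = (s * deriv φ s - L) / s := by
        field_simp
      rw [heq, abs_div, abs_of_pos hs0, div_le_iff₀ hs0]
      have h1 : δ * (1/s) * s = δ := by field_simp
      rw [h1]
      exact this.le
    have hδlog : ∫ s in r..e, δ * (1/s) = δ * (Real.log e - Real.log r) := by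
      rw [intervalIntegral.integral_const_mul, integral_one_div h0notin,
        Real.log_div (ne_of_gt hepos) (ne_of_gt hr0)]
    have hsplit : ∫ s in r..e, (deriv φ s - L * (1/s))
        = (φ e - φ r) - L * (Real.log e - Real.log r) := by
      rw [intervalIntegral.integral_sub ((hcont.mono hsub).intervalIntegrable) (by
        apply ContinuousOn.intervalIntegrable
        apply ContinuousOn.mul continuousOn_const
        exact continuousOn_const.div (continuousOn_id) (fun x hx => ne_of_gt (hsub hx))),
        hFTC, hlog]
    rw [hsplit, hδlog] at hbd
    have hlogmono : Real.log r ≤ Real.log e := Real.log_le_log hr0 hre.le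
    rw [abs_of_nonneg (by nlinarith [hδ] : (0:ℝ) ≤ δ * (Real.log e - Real.log r))] at hbd
    rw [Real.norm_eq_abs] at hbd
    calc |φ r - L * Real.log r - (φ e - L * Real.log e)|
        = |φ e - φ r - L * (Real.log e - Real.log r)| := by
          rw [abs_sub_comm]; ring_nf
      _ ≤ δ * (Real.log e - Real.log r) := hbd
  -- C and K nonneg
  have hCpos : 0 ≤ C := le_trans (abs_nonneg _) (hC (ε₀/2) ⟨by positivity, by linarith⟩)
  have hKpos : 0 ≤ K := abs_nonneg _
  -- choose r
  set r : ℝ := min (e/2) (Real.exp (-(C + K + 1)/δ)) with hrdef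
  have hrpos : 0 < r := lt_min (by positivity) (Real.exp_pos _)
  have hre : r < e := lt_of_le_of_lt (min_le_left _ _) (by linarith)
  have hlogr : Real.log r ≤ -(C + K + 1)/δ := by
    calc Real.log r ≤ Real.log (Real.exp (-(C + K + 1)/δ)) :=
          Real.log_le_log hrpos (min_le_right _ _)
      _ = -(C + K + 1)/δ := Real.log_exp _
  have h1 := main r ⟨hrpos, hre⟩
  have h2 := hC r ⟨hrpos, lt_trans hre heε₀⟩
  have habs3 : ∀ x y : ℝ, |x - y| ≤ |x| + |y| := fun x y => by
    rw [sub_eq_add_neg]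
    exact (abs_add_le _ _).trans (by rw [abs_neg])
  have h3 : |φ r - L * Real.log r| ≤ K + δ * (Real.log e - Real.log r) := by
    have hx : φ r - L * Real.log r
        = (φ r - L * Real.log r - (φ e - L * Real.log e)) + (φ e - L * Real.log e) := by ring
    have habs4 := abs_add_le (φ r - L * Real.log r - (φ e - L * Real.log e)) (φ e - L * Real.log e)
    rw [← hx] at habs4
    linarith [h1, habs4, hKdef.le, hKdef.ge]
  have hLN : |L - N| * |Real.log r| ≤ C + K + δ * (Real.log e - Real.log r) := by
    have hkey : (L - N) * Real.log r
        = (φ r - N * Real.log r) - (φ r - L * Real.log r) := by ring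
    calc |L - N| * |Real.log r| = |(L - N) * Real.log r| := (abs_mul _ _).symm
      _ = |(φ r - N * Real.log r) - (φ r - L * Real.log r)| := by rw [hkey]
      _ ≤ |φ r - N * Real.log r| + |φ r - L * Real.log r| := habs3 _ _
      _ ≤ C + (K + δ * (Real.log e - Real.log r)) := add_le_add h2 h3
      _ = C + K + δ * (Real.log e - Real.log r) := by ring
  have hloge : Real.log e ≤ 0 := Real.log_nonpos hepos.le he1.le
  have hlogrneg : Real.log r < 0 := by
    have : Real.log r ≤ -(C+K+1)/δ := hlogr
    have : -(C+K+1)/δ < 0 := by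
      apply div_neg_of_neg_of_pos _ hδ; linarith
    linarith
  have habs : |Real.log r| = -Real.log r := abs_of_neg hlogrneg
  rw [habs] at hLN
  -- |L - N| = 2δ
  have h2δ : |L - N| = 2 * δ := by rw [hδdef]; ring
  rw [h2δ] at hLN
  -- 2δ(-log r) ≤ C + K + δ(log e - log r) ≤ C + K + δ(-log r)
  have hδloge : δ * Real.log e ≤ 0 := mul_nonpos_of_nonneg_of_nonpos hδ.le hloge
  have hfinal : δ * (-Real.log r) ≤ C + K := by nlinarith [hδloge]
  have hdiv : C + K + 1 ≤ -Real.log r * δ :=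
    (div_le_iff₀ hδ).mp (by linarith [hlogr, neg_div δ (C + K + 1)] :
      (C + K + 1)/δ ≤ -Real.log r)
  rw [mul_comm] at hdiv
  linarith

section
variable {φ : ℝ → ℝ}

lemma helper_reg (hφ : ContDiffOn ℝ 2 φ (Set.Ioi 0)) :
    (∀ r ∈ Set.Ioi (0:ℝ), HasDerivAt φ (deriv φ r) r) ∧
    ContinuousOn (deriv φ) (Set.Ioi 0) ∧
    (∀ r ∈ Set.Ioi (0:ℝ), DifferentiableAt ℝ (fun s => s * deriv φ s) r) := by
  have hd1 : ContDiffOn ℝ 1 (deriv φ) (Set.Ioi 0) :=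
    hφ.deriv_of_isOpen isOpen_Ioi (by norm_num)
  refine ⟨fun r hr => ?_, hd1.continuousOn, fun r hr => ?_⟩
  · exact ((hφ.differentiableOn (by norm_num)).differentiableAt
      (Ioi_mem_nhds hr)).hasDerivAt
  · exact differentiableAt_id.mul
      ((hd1.differentiableOn one_ne_zero).differentiableAt (Ioi_mem_nhds hr))

end

lemma helper_key {φ f : ℝ → ℝ} (hφ : ContDiffOn ℝ 2 φ (Set.Ioi 0))
    (hODE : ∀ r > (0:ℝ), deriv (fun s => s * deriv φ s) r = -(f r))
    (hfc : ContinuousOn f (Set.Ioi 0)) (hfi : IntegrableOn f (Set.Ioi 0))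
    {N C ε₀ β : ℝ} (hε₀ : 0 < ε₀)
    (hC : ∀ r ∈ Set.Ioo (0:ℝ) ε₀, |φ r - N * Real.log r| ≤ C)
    (hβ : Tendsto (fun r => r * deriv φ r) atTop (nhds β)) :
    (∫ t in Set.Ioi (0:ℝ), f t) = N - β ∧
      Tendsto (fun r => r * deriv φ r) (nhdsWithin 0 (Set.Ioi 0)) (nhds N) := by
  obtain ⟨hder, hcont, hdiffw⟩ := helper_reg hφ
  set w : ℝ → ℝ := fun r => r * deriv φ r with hwdef
  have hasW : ∀ r ∈ Set.Ioi (0:ℝ), HasDerivAt w (-(f r)) r := by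
    intro r hr
    have h := (hdiffw r hr).hasDerivAt
    rwa [hODE r hr] at h
  have hFTC : ∀ a b : ℝ, 0 < a → a ≤ b → w a = w b + ∫ s in a..b, f s := by
    intro a b ha hab
    have hsub : Set.uIcc a b ⊆ Set.Ioi (0:ℝ) := by
      rw [Set.uIcc_of_le hab]
      exact fun x hx => lt_of_lt_of_le ha hx.1
    have h := intervalIntegral.integral_eq_sub_of_hasDerivAt
      (fun x hx => hasW x (hsub hx)) ((hfc.mono hsub).neg.intervalIntegrable)
    rw [intervalIntegral.integral_neg] at h
    linarith [h]
  -- behavior at 0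
  have hG0 : Tendsto (fun a => ∫ t in Set.Ioc (0:ℝ) a, f t) (nhdsWithin 0 (Set.Ioi 0))
      (nhds 0) := helper_zero (hfi.mono Set.Ioc_subset_Ioi_self le_rfl)
  have hwzero : Tendsto w (nhdsWithin 0 (Set.Ioi 0))
      (nhds (w 1 + ∫ t in Set.Ioc (0:ℝ) 1, f t)) := by
    have h1 : Tendsto
        (fun a => w 1 + (∫ t in Set.Ioc (0:ℝ) 1, f t) - ∫ t in Set.Ioc (0:ℝ) a, f t)
        (nhdsWithin 0 (Set.Ioi 0)) (nhds (w 1 + (∫ t in Set.Ioc (0:ℝ) 1, f t) - 0)) :=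
      tendsto_const_nhds.sub hG0
    rw [sub_zero] at h1
    refine h1.congr' ?_
    filter_upwards [Ioo_mem_nhdsGT zero_lt_one] with a ha
    have h2 := hFTC a 1 ha.1 ha.2.le
    have h3 : (∫ t in Set.Ioc (0:ℝ) 1, f t)
        = (∫ t in Set.Ioc (0:ℝ) a, f t) + ∫ t in Set.Ioc a 1, f t := by
      rw [← MeasureTheory.setIntegral_union
        (Set.Ioc_disjoint_Ioc.mpr (le_trans inf_le_left le_sup_right))
        measurableSet_Ioc
        (hfi.mono Set.Ioc_subset_Ioi_self le_rfl)
        (hfi.mono (Set.Ioc_subset_Ioi_self.trans (Set.Ioi_subset_Ioi ha.1.le)) le_rfl),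
        Set.Ioc_union_Ioc_eq_Ioc ha.1.le ha.2.le]
    rw [h2, intervalIntegral.integral_of_le ha.2.le]
    linarith [h3]
  -- identify the limit at 0 with N
  have hLN : w 1 + (∫ t in Set.Ioc (0:ℝ) 1, f t) = N :=
    helper_log hε₀ hC hder hcont hwzero
  have hwzeroN : Tendsto w (nhdsWithin 0 (Set.Ioi 0)) (nhds N) := hLN ▸ hwzero
  -- behavior at infinity
  have hwinf : Tendsto w atTop (nhds (w 1 - ∫ t in Set.Ioi (1:ℝ), f t)) := by
    have h1 : Tendsto (fun b : ℝ => w 1 - ∫ t in (1:ℝ)..b, f t) atTop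
        (nhds (w 1 - ∫ t in Set.Ioi (1:ℝ), f t)) :=
      tendsto_const_nhds.sub (MeasureTheory.intervalIntegral_tendsto_integral_Ioi 1
        (hfi.mono (Set.Ioi_subset_Ioi zero_le_one) le_rfl) tendsto_id)
    refine h1.congr' ?_
    filter_upwards [eventually_ge_atTop (1:ℝ)] with b hb
    have := hFTC 1 b zero_lt_one hb
    linarith [this]
  have hβeq : β = w 1 - ∫ t in Set.Ioi (1:ℝ), f t := tendsto_nhds_unique hβ hwinf
  refine ⟨?_, hwzeroN⟩
  rw [helper_split hfi]
  linarith [hLN, hβeq]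
set_option maxHeartbeats 1000000 in
theorem stmt13 (N₁ N₂ : ℕ) (β₁ β₂ : ℝ) (hβ₁ : 0 < β₁) (hβ₂ : 0 < β₂) (u v : ℝ → ℝ)
    (hu : ContDiffOn ℝ 2 u (Set.Ioi 0)) (hv : ContDiffOn ℝ 2 v (Set.Ioi 0))
    (hODEu : ∀ r > (0 : ℝ),
      deriv (fun s => s * deriv u s) r = -(r * Real.exp (v r) * (Real.exp (u r) + 1)))
    (hODEv : ∀ r > (0 : ℝ),
      deriv (fun s => s * deriv v s) r = -(r * Real.exp (u r) * (Real.exp (v r) - 1)))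
    (hu0 : ∃ C ε, 0 < ε ∧ ∀ r ∈ Set.Ioo (0 : ℝ) ε, |u r - 2 * N₁ * Real.log r| ≤ C)
    (hv0 : ∃ C ε, 0 < ε ∧ ∀ r ∈ Set.Ioo (0 : ℝ) ε, |v r - 2 * N₂ * Real.log r| ≤ C)
    (hintu : IntegrableOn (fun t => t * Real.exp (u t)) (Set.Ioi 0))
    (hintv : IntegrableOn (fun t => t * Real.exp (v t)) (Set.Ioi 0))
    (hintuv : IntegrableOn (fun t => t * Real.exp (u t + v t)) (Set.Ioi 0))
    (hlimu : Tendsto (fun r => r * deriv u r) atTop (nhds (-2 * β₁)))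
    (hlimv : Tendsto (fun r => r * deriv v r) atTop (nhds (-2 * β₂)))
    (hdecay : Tendsto
      (fun r => r ^ 2 * (Real.exp (u r + v r) + Real.exp (v r) + Real.exp (u r)))
      atTop (nhds 0)) :
    2 * (∫ t in Set.Ioi (0 : ℝ), t * Real.exp (u t + v t))
        = 4 * (N₁ + 1) * (N₂ + 1) - 4 * (β₁ - 1) * (β₂ - 1) ∧
    2 * (∫ t in Set.Ioi (0 : ℝ), t * Real.exp (u t))
        = 4 * N₁ * (N₂ + 1) - 4 * β₁ * (β₂ - 1) ∧
    2 * (∫ t in Set.Ioi (0 : ℝ), t * Real.exp (v t))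
        = 4 * β₂ * (β₁ - 1) - 4 * N₂ * (N₁ + 1) := by
  obtain ⟨C₁, ε₁, hε₁, hC₁⟩ := hu0
  obtain ⟨C₂, ε₂, hε₂, hC₂⟩ := hv0
  obtain ⟨hderu, hcontu, hdiffwu⟩ := helper_reg hu
  obtain ⟨hderv, hcontv, hdiffwv⟩ := helper_reg hv
  have hucont : ContinuousOn u (Set.Ioi 0) := hu.continuousOn
  have hvcont : ContinuousOn v (Set.Ioi 0) := hv.continuousOn
  have hEuv : ContinuousOn (fun t => Real.exp (u t + v t)) (Set.Ioi 0) :=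
    Real.continuous_exp.comp_continuousOn (hucont.add hvcont)
  have hEu : ContinuousOn (fun t => Real.exp (u t)) (Set.Ioi 0) :=
    Real.continuous_exp.comp_continuousOn hucont
  have hEv : ContinuousOn (fun t => Real.exp (v t)) (Set.Ioi 0) :=
    Real.continuous_exp.comp_continuousOn hvcont
  set fu : ℝ → ℝ := fun t => t * Real.exp (u t + v t) + t * Real.exp (v t) with hfudef
  set fv : ℝ → ℝ := fun t => t * Real.exp (u t + v t) - t * Real.exp (u t) with hfvdef
  have hfuc : ContinuousOn fu (Set.Ioi 0) :=
    (continuousOn_id.mul hEuv).add (continuousOn_id.mul hEv)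
  have hfvc : ContinuousOn fv (Set.Ioi 0) :=
    (continuousOn_id.mul hEuv).sub (continuousOn_id.mul hEu)
  have hfui : IntegrableOn fu (Set.Ioi 0) := hintuv.add hintv
  have hfvi : IntegrableOn fv (Set.Ioi 0) := hintuv.sub hintu
  have hODEu' : ∀ r > (0:ℝ), deriv (fun s => s * deriv u s) r = -(fu r) := by
    intro r hr
    rw [hODEu r hr, hfudef]
    simp only [Real.exp_add]
    ring
  have hODEv' : ∀ r > (0:ℝ), deriv (fun s => s * deriv v s) r = -(fv r) := by
    intro r hr
    rw [hODEv r hr, hfvdef]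
    simp only [Real.exp_add]
    ring
  obtain ⟨hIu, hu_w0⟩ := helper_key hu hODEu' hfuc hfui hε₁ hC₁ hlimu
  obtain ⟨hIv, hv_w0⟩ := helper_key hv hODEv' hfvc hfvi hε₂ hC₂ hlimv
  -- fu integral identity
  have hE1 : (∫ t in Set.Ioi (0:ℝ), t * Real.exp (u t + v t))
      + (∫ t in Set.Ioi (0:ℝ), t * Real.exp (v t)) = 2 * N₁ + 2 * β₁ := by
    have hadd : (∫ t in Set.Ioi (0:ℝ), fu t)
        = (∫ t in Set.Ioi (0:ℝ), t * Real.exp (u t + v t))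
          + ∫ t in Set.Ioi (0:ℝ), t * Real.exp (v t) := by
      rw [hfudef]; exact MeasureTheory.integral_add hintuv hintv
    rw [← hadd, hIu]; ring
  have hE2 : (∫ t in Set.Ioi (0:ℝ), t * Real.exp (u t + v t))
      - (∫ t in Set.Ioi (0:ℝ), t * Real.exp (u t)) = 2 * N₂ + 2 * β₂ := by
    have hadd : (∫ t in Set.Ioi (0:ℝ), fv t)
        = (∫ t in Set.Ioi (0:ℝ), t * Real.exp (u t + v t))
          - ∫ t in Set.Ioi (0:ℝ), t * Real.exp (u t) := by
      rw [hfvdef]; exact MeasureTheory.integral_sub hintuv hintu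
    rw [← hadd, hIv]; ring
  -- Pohozaev
  set g : ℝ → ℝ := fun r => Real.exp (u r + v r) + Real.exp (v r) - Real.exp (u r) with hgdef
  set g' : ℝ → ℝ := fun r => Real.exp (u r + v r) * (deriv u r + deriv v r)
      + Real.exp (v r) * deriv v r - Real.exp (u r) * deriv u r with hg'def
  set h : ℝ → ℝ := fun s => s * g s with hhdef
  have hhc : ContinuousOn h (Set.Ioi 0) :=
    continuousOn_id.mul ((hEuv.add hEv).sub hEu)
  have hhi : IntegrableOn h (Set.Ioi 0) := by
    have heq : h = fun t => (t * Real.exp (u t + v t) + t * Real.exp (v t))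
        - t * Real.exp (u t) := by
      funext t; simp only [hhdef, hgdef]; ring
    rw [heq]
    exact (hintuv.add hintv).sub hintu
  have hg'c : ContinuousOn g' (Set.Ioi 0) :=
    ((hEuv.mul (hcontu.add hcontv)).add (hEv.mul hcontv)).sub (hEu.mul hcontu)
  have hgc : ContinuousOn g (Set.Ioi 0) := (hEuv.add hEv).sub hEu
  have hasg : ∀ r ∈ Set.Ioi (0:ℝ), HasDerivAt g (g' r) r := by
    intro r hr
    exact (((hderu r hr).add (hderv r hr)).exp.add (hderv r hr).exp).sub (hderu r hr).exp
  set W : ℝ → ℝ := fun r => (r * deriv u r) * (r * deriv v r) with hWdef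
  have hasW : ∀ r ∈ Set.Ioi (0:ℝ), HasDerivAt W (-(r^2 * g' r)) r := by
    intro r hr
    have h1 : HasDerivAt (fun s => s * deriv u s) (-(fu r)) r := by
      have := (hdiffwu r hr).hasDerivAt
      rwa [hODEu' r hr] at this
    have h2 : HasDerivAt (fun s => s * deriv v s) (-(fv r)) r := by
      have := (hdiffwv r hr).hasDerivAt
      rwa [hODEv' r hr] at this
    have h3 := h1.mul h2
    convert h3 using 1
    · rfl
    · rfl
    · rfl
    simp only [hfudef, hfvdef, hg'def]
    ring
  -- combined identity
  have hiden : ∀ a b : ℝ, 0 < a → a ≤ b →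
      W b + b^2 * g b = W a + a^2 * g a + 2 * ∫ s in a..b, h s := by
    intro a b ha hab
    have hsub : Set.uIcc a b ⊆ Set.Ioi (0:ℝ) := by
      rw [Set.uIcc_of_le hab]
      exact fun x hx => lt_of_lt_of_le ha hx.1
    have hFTC : ∫ s in a..b, -(s^2 * g' s) = W b - W a :=
      intervalIntegral.integral_eq_sub_of_hasDerivAt (fun x hx => hasW x (hsub hx))
        (((continuousOn_pow 2).mul (hg'c.mono hsub)).neg.intervalIntegrable)
    have hIBP : ∫ s in a..b, s^2 * g' s
        = b^2 * g b - a^2 * g a - ∫ s in a..b, (2*s) * g s := by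
      apply intervalIntegral.integral_mul_deriv_eq_deriv_mul
        (u := fun x => x^2) (u' := fun x => 2*x) (v := g) (v' := g')
      · intro x hx
        simpa using (hasDerivAt_pow 2 x)
      · intro x hx
        exact hasg x (hsub hx)
      · exact (continuous_const.mul continuous_id).continuousOn.intervalIntegrable
      · exact (hg'c.mono hsub).intervalIntegrable
    have hint2 : ∫ s in a..b, (2*s) * g s = 2 * ∫ s in a..b, h s := by
      rw [← intervalIntegral.integral_const_mul]
      apply intervalIntegral.integral_congr
      intro x hx
      simp only [hhdef]; ring
    rw [intervalIntegral.integral_neg, hIBP, hint2] at hFTC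
    linarith [hFTC]
  -- limit as a → 0 of a^2 g a
  have hg0 : Tendsto (fun a => a^2 * g a) (nhdsWithin 0 (Set.Ioi 0)) (nhds 0) := by
    set M : ℝ := Real.exp C₁ * Real.exp C₂ + Real.exp C₂ + Real.exp C₁ with hMdef
    apply squeeze_zero_norm'
      (a := fun a => M * a^2)
    · filter_upwards [Ioo_mem_nhdsGT
        (lt_min (lt_min hε₁ hε₂) zero_lt_one)] with a ha
      obtain ⟨ha0, haup⟩ := ha
      have ha1 : a < 1 := lt_of_lt_of_le haup (min_le_right _ _)
      have haε₁ : a < ε₁ := lt_of_lt_of_le haup ((min_le_left _ _).trans (min_le_left _ _))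
      have haε₂ : a < ε₂ := lt_of_lt_of_le haup ((min_le_left _ _).trans (min_le_right _ _))
      have hloga : Real.log a ≤ 0 := Real.log_nonpos ha0.le ha1.le
      have hub : u a ≤ C₁ := by
        have := (abs_le.mp (hC₁ a ⟨ha0, haε₁⟩)).2
        nlinarith [this, mul_nonpos_of_nonneg_of_nonpos
          (by positivity : (0:ℝ) ≤ 2 * (N₁:ℝ)) hloga]
      have hvb : v a ≤ C₂ := by
        have := (abs_le.mp (hC₂ a ⟨ha0, haε₂⟩)).2
        nlinarith [this, mul_nonpos_of_nonneg_of_nonpos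
          (by positivity : (0:ℝ) ≤ 2 * (N₂:ℝ)) hloga]
      have h1 : Real.exp (u a) ≤ Real.exp C₁ := Real.exp_le_exp.mpr hub
      have h2 : Real.exp (v a) ≤ Real.exp C₂ := Real.exp_le_exp.mpr hvb
      have h3 : Real.exp (u a + v a) ≤ Real.exp C₁ * Real.exp C₂ := by
        rw [Real.exp_add]
        exact mul_le_mul h1 h2 (Real.exp_pos _).le (Real.exp_pos _).le
      have hgb : |g a| ≤ M := by
        have hga : g a = Real.exp (u a + v a) + Real.exp (v a) - Real.exp (u a) := rfl
        have hMa : M = Real.exp C₁ * Real.exp C₂ + Real.exp C₂ + Real.exp C₁ := rfl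
        rw [hga, hMa]
        have p1 := Real.exp_pos (u a)
        have p2 := Real.exp_pos (v a)
        have p3 := Real.exp_pos (u a + v a)
        rw [abs_le]
        constructor <;> nlinarith
      calc ‖a^2 * g a‖ = a^2 * |g a| := by
            rw [Real.norm_eq_abs, abs_mul, abs_of_nonneg (sq_nonneg a)]
        _ ≤ a^2 * M := by nlinarith [sq_nonneg a, abs_nonneg (g a)]
        _ = M * a^2 := by ring
    · have : Tendsto (fun a : ℝ => M * a^2) (nhds 0) (nhds (M * 0^2)) :=
        (continuous_const.mul (continuous_pow 2)).tendsto 0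
      simpa using this.mono_left nhdsWithin_le_nhds
  -- limit as b → ∞ of b^2 g b
  have hginf : Tendsto (fun b => b^2 * g b) atTop (nhds 0) := by
    apply squeeze_zero_norm'
      (a := fun b => b ^ 2 * (Real.exp (u b + v b) + Real.exp (v b) + Real.exp (u b)))
    · filter_upwards [eventually_gt_atTop (0:ℝ)] with b hb
      have p1 := Real.exp_pos (u b)
      have p2 := Real.exp_pos (v b)
      have p3 := Real.exp_pos (u b + v b)
      rw [Real.norm_eq_abs, abs_mul, abs_of_nonneg (sq_nonneg b)]
      have hgb2 : g b = Real.exp (u b + v b) + Real.exp (v b) - Real.exp (u b) := rfl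
      have : |g b| ≤ Real.exp (u b + v b) + Real.exp (v b) + Real.exp (u b) := by
        rw [hgb2, abs_le]; constructor <;> nlinarith
      nlinarith [sq_nonneg b, abs_nonneg (g b)]
    · exact hdecay
  -- stage 1 : identity for fixed b
  have hstage1 : ∀ b : ℝ, 0 < b → W b + b^2 * g b
      = (2 * N₁) * (2 * N₂) + 2 * ∫ t in Set.Ioc (0:ℝ) b, h t := by
    intro b hb
    have hW0 : Tendsto W (nhdsWithin 0 (Set.Ioi 0)) (nhds ((2 * N₁) * (2 * N₂))) :=
      hu_w0.mul hv_w0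
    have hG0 : Tendsto (fun a => ∫ t in Set.Ioc (0:ℝ) a, h t) (nhdsWithin 0 (Set.Ioi 0))
        (nhds 0) := helper_zero (hhi.mono Set.Ioc_subset_Ioi_self le_rfl)
    have hRHS : Tendsto (fun a => W a + a^2 * g a
        + 2 * ((∫ t in Set.Ioc (0:ℝ) b, h t) - ∫ t in Set.Ioc (0:ℝ) a, h t))
        (nhdsWithin 0 (Set.Ioi 0))
        (nhds ((2 * N₁) * (2 * N₂) + 0 + 2 * ((∫ t in Set.Ioc (0:ℝ) b, h t) - 0))) :=
      (hW0.add hg0).add ((tendsto_const_nhds.sub hG0).const_mul 2)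
    have hLHS : Tendsto (fun _ : ℝ => W b + b^2 * g b) (nhdsWithin 0 (Set.Ioi 0))
        (nhds (W b + b^2 * g b)) := tendsto_const_nhds
    have heq : (fun _ : ℝ => W b + b^2 * g b) =ᶠ[nhdsWithin 0 (Set.Ioi 0)]
        (fun a => W a + a^2 * g a
          + 2 * ((∫ t in Set.Ioc (0:ℝ) b, h t) - ∫ t in Set.Ioc (0:ℝ) a, h t)) := by
      filter_upwards [Ioo_mem_nhdsGT hb] with a ha
      have hsplit : (∫ t in Set.Ioc (0:ℝ) b, h t)
          = (∫ t in Set.Ioc (0:ℝ) a, h t) + ∫ t in Set.Ioc a b, h t := by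
        rw [← MeasureTheory.setIntegral_union
          (Set.Ioc_disjoint_Ioc.mpr (le_trans inf_le_left le_sup_right))
          measurableSet_Ioc
          (hhi.mono Set.Ioc_subset_Ioi_self le_rfl)
          (hhi.mono (Set.Ioc_subset_Ioi_self.trans (Set.Ioi_subset_Ioi ha.1.le)) le_rfl),
          Set.Ioc_union_Ioc_eq_Ioc ha.1.le ha.2.le]
      have hid := hiden a b ha.1 ha.2.le
      rw [intervalIntegral.integral_of_le ha.2.le] at hid
      rw [hid]
      rw [hsplit]
      ring
    have := tendsto_nhds_unique (hLHS.congr' heq) hRHS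
    rw [this]
    ring
  -- stage 2 : take b → ∞
  have hWinf : Tendsto W atTop (nhds ((-2*β₁) * (-2*β₂))) := hlimu.mul hlimv
  have hLHSinf : Tendsto (fun b => W b + b^2 * g b) atTop
      (nhds ((-2*β₁) * (-2*β₂) + 0)) := hWinf.add hginf
  have hRHSinf : Tendsto (fun b => (2 * (N₁:ℝ)) * (2 * N₂) + 2 * ∫ t in Set.Ioc (0:ℝ) b, h t)
      atTop (nhds ((2 * (N₁:ℝ)) * (2 * N₂) + 2 * ∫ t in Set.Ioi (0:ℝ), h t)) :=
    tendsto_const_nhds.add ((helper_atTop hhi).const_mul 2)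
  have hE3 : (-2*β₁) * (-2*β₂) + 0
      = (2 * (N₁:ℝ)) * (2 * N₂) + 2 * ∫ t in Set.Ioi (0:ℝ), h t := by
    apply tendsto_nhds_unique _ hRHSinf
    apply hLHSinf.congr' ?_
    filter_upwards [eventually_gt_atTop (0:ℝ)] with b hb
    exact hstage1 b hb
  have hIh : ∫ t in Set.Ioi (0:ℝ), h t
      = (∫ t in Set.Ioi (0:ℝ), t * Real.exp (u t + v t))
        + (∫ t in Set.Ioi (0:ℝ), t * Real.exp (v t))
        - ∫ t in Set.Ioi (0:ℝ), t * Real.exp (u t) := by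
    have heq : h = fun t => (t * Real.exp (u t + v t) + t * Real.exp (v t))
        - t * Real.exp (u t) := by
      funext t; simp only [hhdef, hgdef]; ring
    have h1 : (∫ t in Set.Ioi (0:ℝ), h t)
        = ∫ t in Set.Ioi (0:ℝ), ((t * Real.exp (u t + v t) + t * Real.exp (v t))
            - t * Real.exp (u t)) := by rw [heq]
    have hsum : IntegrableOn (fun t => t * Real.exp (u t + v t) + t * Real.exp (v t))
        (Set.Ioi 0) := hintuv.add hintv
    rw [h1, MeasureTheory.integral_sub hsum hintu,
      MeasureTheory.integral_add hintuv hintv]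
  rw [hIh] at hE3
  refine ⟨by linear_combination 2 * hE2 + 2 * hE1 + hE3, by linear_combination 2 * hE1 + hE3,
    by linear_combination -(2:ℝ) * hE2 - hE3⟩
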